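/- arXiv:1012.5931 — 2 statements merged into one kernel-verified Lean document; each statement's English description precedes it below -/
import Mathlib

section
/- For every r₀ > 0 and every K ∈ ℝ there exists a constant C > 0 with the following property. Let (U, A, ν, R) with twist constant K be a smooth conformal solution on [τ₀,τ₁) with R(τ,ξ) ≥ r₀ for all (τ,ξ), and suppose τ₁ − τ₀ ≤ 1. Then for every τ ∈ [τ₀,τ₁): (i) ‖R‖_{C¹([τ₀,τ]×ℝ)} ≤ C ( (τ − τ₀) · sup_{[τ₀,τ]×ℝ} e^{2ν} + sup_ξ (|R| + |R_τ| + |R_ξ|)(τ₀,ξ) ); (ii) if moreover R_u(τ₀,·) > 0 and R_v(τ₀,·) > 0, then (R_τ² − R_ξ²)(τ,ξ) ≥ (inf_{ξ'} R_u(τ₀,ξ'))·(inf_{ξ'} R_v(τ₀,ξ')) for all ξ. Here ‖R‖_{C¹([τ₀,τ]×ℝ)} := sup over [τ₀,τ]×ℝ of (|R| + |R_τ| + |R_ξ|), R_u := R_τ − R_ξ and R_v := R_τ + R_ξ. -/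
open Real

noncomputable section

/-- Partial derivative in the first (time) variable. -/
def pd1 (f : ℝ → ℝ → ℝ) (x y : ℝ) : ℝ := deriv (fun s => f s y) x

/-- Partial derivative in the second (space) variable. -/
def pd2 (f : ℝ → ℝ → ℝ) (x y : ℝ) : ℝ := deriv (fun s => f x s) y

/-- A smooth solution `(U, A, ν, R)` of the `T²`-symmetric vacuum Einstein equations
in conformal coordinates, with twist constant `K`, on the time set `D` (times `ℝ` in
the space variable `ξ`, with all coefficients `2π`-periodic in `ξ` and `R > 0`).
The equations are the constraints (C1), (C2) and the evolution equations
(E1)–(E4) of the paper. -/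
structure ConfSol (D : Set ℝ) (K : ℝ) where
  U : ℝ → ℝ → ℝ
  A : ℝ → ℝ → ℝ
  ν : ℝ → ℝ → ℝ
  R : ℝ → ℝ → ℝ
  smooth_U : ContDiff ℝ (⊤ : ℕ∞) (Function.uncurry U)
  smooth_A : ContDiff ℝ (⊤ : ℕ∞) (Function.uncurry A)
  smooth_ν : ContDiff ℝ (⊤ : ℕ∞) (Function.uncurry ν)
  smooth_R : ContDiff ℝ (⊤ : ℕ∞) (Function.uncurry R)
  periodic_U : ∀ τ ξ : ℝ, U τ (ξ + 2 * π) = U τ ξ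
  periodic_A : ∀ τ ξ : ℝ, A τ (ξ + 2 * π) = A τ ξ
  periodic_ν : ∀ τ ξ : ℝ, ν τ (ξ + 2 * π) = ν τ ξ
  periodic_R : ∀ τ ξ : ℝ, R τ (ξ + 2 * π) = R τ ξ
  Rpos : ∀ τ ∈ D, ∀ ξ : ℝ, 0 < R τ ξ
  constraint1 : ∀ τ ∈ D, ∀ ξ : ℝ,
    (pd1 U τ ξ) ^ 2 + (pd2 U τ ξ) ^ 2
      + exp (4 * U τ ξ) / (4 * (R τ ξ) ^ 2) * ((pd1 A τ ξ) ^ 2 + (pd2 A τ ξ) ^ 2)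
      + pd2 (pd2 R) τ ξ / R τ ξ
      - pd1 ν τ ξ * pd1 R τ ξ / R τ ξ
      - pd2 ν τ ξ * pd2 R τ ξ / R τ ξ
      + exp (2 * ν τ ξ) * K ^ 2 / (4 * (R τ ξ) ^ 4) = 0
  constraint2 : ∀ τ ∈ D, ∀ ξ : ℝ,
    2 * pd1 U τ ξ * pd2 U τ ξ
      + exp (4 * U τ ξ) / (2 * (R τ ξ) ^ 2) * (pd1 A τ ξ * pd2 A τ ξ)
      + pd1 (pd2 R) τ ξ / R τ ξ
      - pd2 ν τ ξ * pd1 R τ ξ / R τ ξ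
      - pd1 ν τ ξ * pd2 R τ ξ / R τ ξ = 0
  evol_U : ∀ τ ∈ D, ∀ ξ : ℝ,
    pd1 (pd1 U) τ ξ - pd2 (pd2 U) τ ξ
      = pd2 R τ ξ * pd2 U τ ξ / R τ ξ - pd1 R τ ξ * pd1 U τ ξ / R τ ξ
        + exp (4 * U τ ξ) / (2 * (R τ ξ) ^ 2) * ((pd1 A τ ξ) ^ 2 - (pd2 A τ ξ) ^ 2)
  evol_A : ∀ τ ∈ D, ∀ ξ : ℝ,
    pd1 (pd1 A) τ ξ - pd2 (pd2 A) τ ξ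
      = pd1 R τ ξ * pd1 A τ ξ / R τ ξ - pd2 R τ ξ * pd2 A τ ξ / R τ ξ
        + 4 * (pd2 A τ ξ * pd2 U τ ξ - pd1 A τ ξ * pd1 U τ ξ)
  evol_R : ∀ τ ∈ D, ∀ ξ : ℝ,
    pd1 (pd1 R) τ ξ - pd2 (pd2 R) τ ξ
      = exp (2 * ν τ ξ) * K ^ 2 / (2 * (R τ ξ) ^ 3)
  evol_ν : ∀ τ ∈ D, ∀ ξ : ℝ,
    pd1 (pd1 ν) τ ξ - pd2 (pd2 ν) τ ξ
      = (pd2 U τ ξ) ^ 2 - (pd1 U τ ξ) ^ 2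
        + exp (4 * U τ ξ) / (4 * (R τ ξ) ^ 2) * ((pd1 A τ ξ) ^ 2 - (pd2 A τ ξ) ^ 2)
        - 3 * exp (2 * ν τ ξ) * K ^ 2 / (4 * (R τ ξ) ^ 4)

/-- The conformal energy `𝓔_conf(τ)`. -/
def Econf (K : ℝ) (U A ν R : ℝ → ℝ → ℝ) (τ : ℝ) : ℝ :=
  ∫ ξ in (0:ℝ)..(2 * π),
    (R τ ξ * ((pd1 U τ ξ) ^ 2 + (pd2 U τ ξ) ^ 2)
      + exp (4 * U τ ξ) / (4 * R τ ξ) * ((pd1 A τ ξ) ^ 2 + (pd2 A τ ξ) ^ 2)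
      + exp (2 * ν τ ξ) * K ^ 2 / (4 * (R τ ξ) ^ 3))

/-- The sup of a function over the strip `[τ₀,τ] × ℝ`. -/
def supStrip (f : ℝ → ℝ → ℝ) (τ₀ τ : ℝ) : ℝ :=
  sSup ((fun p : ℝ × ℝ => f p.1 p.2) '' (Set.Icc τ₀ τ ×ˢ (Set.univ : Set ℝ)))

/-- The `C¹` norm `‖R‖_{C¹([τ₀,τ]×ℝ)} = sup (|R| + |R_τ| + |R_ξ|)`. -/
def C1norm (R : ℝ → ℝ → ℝ) (τ₀ τ : ℝ) : ℝ :=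
  supStrip (fun t x => |R t x| + |pd1 R t x| + |pd2 R t x|) τ₀ τ

/-- The `L²` norm on `[0,2π]`. -/
def L2n (f : ℝ → ℝ) : ℝ := Real.sqrt (∫ ξ in (0:ℝ)..(2 * π), (f ξ) ^ 2)

/-- The `L¹` norm on `[0,2π]`. -/
def L1n (f : ℝ → ℝ) : ℝ := ∫ ξ in (0:ℝ)..(2 * π), |f ξ|

/-- The `H¹` norm on `[0,2π]`. -/
def H1n (f : ℝ → ℝ) : ℝ := L2n f + L2n (deriv f)

/-- The `W^{1,1}` norm on `[0,2π]`. -/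
def W11n (f : ℝ → ℝ) : ℝ := L1n f + L1n (deriv f)

/-- The `W^{2,1}` norm on `[0,2π]`. -/
def W21n (f : ℝ → ℝ) : ℝ := L1n f + L1n (deriv f) + L1n (deriv (deriv f))

/-- The total norm `N(τ)` of a conformal solution. -/
def Nnorm (U A ν R : ℝ → ℝ → ℝ) (τ : ℝ) : ℝ :=
  H1n (U τ) + H1n (A τ)
    + L2n (fun ξ => pd1 U τ ξ) + L2n (fun ξ => pd1 A τ ξ)
    + W11n (ν τ) + L1n (fun ξ => pd1 ν τ ξ)
    + W21n (R τ) + W11n (fun ξ => pd1 R τ ξ)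
    + (⨆ ξ : ℝ, 1 / R τ ξ)
    + 1 / ((⨅ ξ : ℝ, (pd1 R τ ξ - pd2 R τ ξ)) * (⨅ ξ : ℝ, (pd1 R τ ξ + pd2 R τ ξ)))

end

namespace AreaAux

lemma hasDerivAt_comp_curve {E : Type*} [NormedAddCommGroup E] [NormedSpace ℝ E]
    {g : ℝ × ℝ → E} (hg : Differentiable ℝ g) {γ : ℝ → ℝ × ℝ} {v : ℝ × ℝ} {t : ℝ}
    (hγ : HasDerivAt γ v t) :
    HasDerivAt (fun s => g (γ s)) (fderiv ℝ g (γ t) v) t :=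
  (hg (γ t)).hasFDerivAt.comp_hasDerivAt t hγ

lemma curve1 (t x : ℝ) : HasDerivAt (fun s : ℝ => (s, x)) ((1, 0) : ℝ × ℝ) t :=
  (hasDerivAt_id t).prodMk (hasDerivAt_const t x)

lemma curve2 (t x : ℝ) : HasDerivAt (fun s : ℝ => (t, s)) ((0, 1) : ℝ × ℝ) x :=
  (hasDerivAt_const x t).prodMk (hasDerivAt_id x)

lemma curveP (c t : ℝ) : HasDerivAt (fun s : ℝ => (s, c + s)) ((1, 1) : ℝ × ℝ) t := by
  have := (hasDerivAt_id t).prodMk (((hasDerivAt_const t c).add (hasDerivAt_id t)))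
  simpa using this

lemma curveM (c t : ℝ) : HasDerivAt (fun s : ℝ => (s, c - s)) ((1, -1) : ℝ × ℝ) t := by
  have := (hasDerivAt_id t).prodMk (((hasDerivAt_const t c).sub (hasDerivAt_id t)))
  simpa using this

variable {f : ℝ → ℝ → ℝ}

lemma hasDerivAt_pd1 (hf : Differentiable ℝ (Function.uncurry f)) (t x : ℝ) :
    HasDerivAt (fun s => f s x) (fderiv ℝ (Function.uncurry f) (t, x) (1, 0)) t :=
  hasDerivAt_comp_curve hf (curve1 t x)

lemma hasDerivAt_pd2 (hf : Differentiable ℝ (Function.uncurry f)) (t x : ℝ) :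
    HasDerivAt (fun s => f t s) (fderiv ℝ (Function.uncurry f) (t, x) (0, 1)) x :=
  hasDerivAt_comp_curve hf (curve2 t x)

lemma pd1_eq (hf : Differentiable ℝ (Function.uncurry f)) (t x : ℝ) :
    pd1 f t x = fderiv ℝ (Function.uncurry f) (t, x) (1, 0) :=
  (hasDerivAt_pd1 hf t x).deriv

lemma pd2_eq (hf : Differentiable ℝ (Function.uncurry f)) (t x : ℝ) :
    pd2 f t x = fderiv ℝ (Function.uncurry f) (t, x) (0, 1) :=
  (hasDerivAt_pd2 hf t x).deriv

end AreaAux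

namespace AreaAux
variable {f : ℝ → ℝ → ℝ}

lemma smooth_fderiv (hf : ContDiff ℝ (⊤ : ℕ∞) (Function.uncurry f)) :
    ContDiff ℝ (⊤ : ℕ∞) (fderiv ℝ (Function.uncurry f)) :=
  hf.fderiv_right (by exact_mod_cast le_top)

lemma hasDerivAt_F_curve (hf : ContDiff ℝ (⊤ : ℕ∞) (Function.uncurry f))
    {γ : ℝ → ℝ × ℝ} {v : ℝ × ℝ} {t : ℝ} (hγ : HasDerivAt γ v t) (w : ℝ × ℝ) :
    HasDerivAt (fun s => fderiv ℝ (Function.uncurry f) (γ s) w)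
      (fderiv ℝ (fderiv ℝ (Function.uncurry f)) (γ t) v w) t := by
  have h1 : HasDerivAt (fun s => fderiv ℝ (Function.uncurry f) (γ s))
      (fderiv ℝ (fderiv ℝ (Function.uncurry f)) (γ t) v) t :=
    hasDerivAt_comp_curve ((smooth_fderiv hf).differentiable (by simp)) hγ
  simpa using h1.clm_apply (hasDerivAt_const t w)

lemma pd1pd1_eq (hf : ContDiff ℝ (⊤ : ℕ∞) (Function.uncurry f)) (t x : ℝ) :
    pd1 (pd1 f) t x = fderiv ℝ (fderiv ℝ (Function.uncurry f)) (t, x) (1, 0) (1, 0) := by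
  have he : (fun s => pd1 f s x) = fun s => fderiv ℝ (Function.uncurry f) (s, x) (1, 0) :=
    funext fun s => pd1_eq (hf.differentiable (by simp)) s x
  show deriv (fun s => pd1 f s x) t = _
  rw [he]
  exact (hasDerivAt_F_curve hf (curve1 t x) (1, 0)).deriv

lemma pd2pd2_eq (hf : ContDiff ℝ (⊤ : ℕ∞) (Function.uncurry f)) (t x : ℝ) :
    pd2 (pd2 f) t x = fderiv ℝ (fderiv ℝ (Function.uncurry f)) (t, x) (0, 1) (0, 1) := by
  have he : (fun s => pd2 f t s) = fun s => fderiv ℝ (Function.uncurry f) (t, s) (0, 1) :=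
    funext fun s => pd2_eq (hf.differentiable (by simp)) t s
  show deriv (fun s => pd2 f t s) x = _
  rw [he]
  exact (hasDerivAt_F_curve hf (curve2 t x) (0, 1)).deriv

lemma symm2 (hf : ContDiff ℝ (⊤ : ℕ∞) (Function.uncurry f)) (p : ℝ × ℝ) (v w : ℝ × ℝ) :
    fderiv ℝ (fderiv ℝ (Function.uncurry f)) p v w
      = fderiv ℝ (fderiv ℝ (Function.uncurry f)) p w v :=
  second_derivative_symmetric (fun y => (hf.differentiable (by simp) y).hasFDerivAt)
    (((smooth_fderiv hf).differentiable (by simp) p).hasFDerivAt) v w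

lemma hasDerivAt_Ru (hf : ContDiff ℝ (⊤ : ℕ∞) (Function.uncurry f)) (c t : ℝ) :
    HasDerivAt (fun s => pd1 f s (c + s) - pd2 f s (c + s))
      (pd1 (pd1 f) t (c + t) - pd2 (pd2 f) t (c + t)) t := by
  have he : (fun s => pd1 f s (c + s) - pd2 f s (c + s))
      = fun s => fderiv ℝ (Function.uncurry f) (s, c + s) (1, 0)
          - fderiv ℝ (Function.uncurry f) (s, c + s) (0, 1) :=
    funext fun s => by
      rw [pd1_eq (hf.differentiable (by simp)), pd2_eq (hf.differentiable (by simp))]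
  rw [he, pd1pd1_eq hf, pd2pd2_eq hf]
  have h := (hasDerivAt_F_curve hf (curveP c t) (1, 0)).fun_sub
    (hasDerivAt_F_curve hf (curveP c t) (0, 1))
  refine h.congr_deriv ?_
  have hs := symm2 hf (t, c + t) ((1 : ℝ), (0 : ℝ)) ((0 : ℝ), (1 : ℝ))
  have e1 : ((1 : ℝ), (1 : ℝ)) = ((1 : ℝ), (0 : ℝ)) + ((0 : ℝ), (1 : ℝ)) := by norm_num
  rw [e1, map_add, ContinuousLinearMap.add_apply, ContinuousLinearMap.add_apply]
  linarith [hs]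

lemma hasDerivAt_Rv (hf : ContDiff ℝ (⊤ : ℕ∞) (Function.uncurry f)) (c t : ℝ) :
    HasDerivAt (fun s => pd1 f s (c - s) + pd2 f s (c - s))
      (pd1 (pd1 f) t (c - t) - pd2 (pd2 f) t (c - t)) t := by
  have he : (fun s => pd1 f s (c - s) + pd2 f s (c - s))
      = fun s => fderiv ℝ (Function.uncurry f) (s, c - s) (1, 0)
          + fderiv ℝ (Function.uncurry f) (s, c - s) (0, 1) :=
    funext fun s => by
      rw [pd1_eq (hf.differentiable (by simp)), pd2_eq (hf.differentiable (by simp))]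
  rw [he, pd1pd1_eq hf, pd2pd2_eq hf]
  have h := (hasDerivAt_F_curve hf (curveM c t) (1, 0)).fun_add
    (hasDerivAt_F_curve hf (curveM c t) (0, 1))
  refine h.congr_deriv ?_
  have hs := symm2 hf (t, c - t) ((1 : ℝ), (0 : ℝ)) ((0 : ℝ), (1 : ℝ))
  have e1 : ((1 : ℝ), (-1 : ℝ)) = ((1 : ℝ), (0 : ℝ)) - ((0 : ℝ), (1 : ℝ)) := by norm_num
  rw [e1, map_sub, ContinuousLinearMap.sub_apply, ContinuousLinearMap.sub_apply]
  linarith [hs]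

end AreaAux

namespace AreaAux

lemma le_of_deriv_le {h : ℝ → ℝ} {a t M : ℝ} (hd : Differentiable ℝ h) (hat : a ≤ t)
    (hM : ∀ s ∈ Set.Icc a t, deriv h s ≤ M) : h t ≤ h a + M * (t - a) := by
  have hmono : MonotoneOn (fun s => M * s - h s) (Set.Icc a t) := by
    apply monotoneOn_of_deriv_nonneg (convex_Icc a t)
    · exact ((continuous_const.mul continuous_id).sub hd.continuous).continuousOn
    · exact (((differentiable_const M).mul differentiable_id).sub hd).differentiableOn
    · intro s hs
      have hs' : s ∈ Set.Icc a t := interior_subset hs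
      have hds : HasDerivAt (fun s => M * s - h s) (M - deriv h s) s := by
        simpa using ((hasDerivAt_id s).const_mul M).fun_sub (hd s).hasDerivAt
      rw [hds.deriv]
      linarith [hM s hs']
  have := hmono (Set.left_mem_Icc.2 hat) (Set.right_mem_Icc.2 hat) hat
  simp only at this
  linarith

lemma ge_of_deriv_ge {h : ℝ → ℝ} {a t m : ℝ} (hd : Differentiable ℝ h) (hat : a ≤ t)
    (hm : ∀ s ∈ Set.Icc a t, m ≤ deriv h s) : h a + m * (t - a) ≤ h t := by
  have := le_of_deriv_le (h := fun s => -h s) (M := -m) hd.neg hat (fun s hs => by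
    rw [deriv.fun_neg]
    linarith [hm s hs])
  linarith

lemma range_eq_image_of_periodic {g : ℝ → ℝ} (hp : ∀ x, g (x + 2 * Real.pi) = g x) :
    Set.range g = g '' Set.Icc 0 (2 * Real.pi) := by
  apply Set.Subset.antisymm
  · rintro _ ⟨x, rfl⟩
    have hper : Function.Periodic g (2 * Real.pi) := hp
    obtain ⟨y, hy, hxy⟩ := hper.exists_mem_Ico₀ (by positivity) x
    exact ⟨y, Set.Ico_subset_Icc_self hy, hxy.symm⟩
  · exact (Set.image_subset_range g _)

lemma bddAbove_range_of_periodic {g : ℝ → ℝ} (hc : Continuous g)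
    (hp : ∀ x, g (x + 2 * Real.pi) = g x) : BddAbove (Set.range g) := by
  rw [range_eq_image_of_periodic hp]
  exact (isCompact_Icc.image hc).bddAbove

end AreaAux


namespace AreaAux

lemma le_supStrip {g : ℝ → ℝ → ℝ} (hc : Continuous fun p : ℝ × ℝ => g p.1 p.2)
    (hp : ∀ t x, g t (x + 2 * π) = g t x) {a b : ℝ} (hab : a ≤ b) :
    ∀ t ∈ Set.Icc a b, ∀ x : ℝ, g t x ≤ supStrip g a b := by
  intro t ht x
  have himg : (fun p : ℝ × ℝ => g p.1 p.2) '' (Set.Icc a b ×ˢ (Set.univ : Set ℝ))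
      ⊆ (fun p : ℝ × ℝ => g p.1 p.2) '' (Set.Icc a b ×ˢ Set.Icc 0 (2 * π)) := by
    rintro _ ⟨⟨s, y⟩, ⟨hs, -⟩, rfl⟩
    have hper : Function.Periodic (g s) (2 * π) := hp s
    obtain ⟨y', hy', hval⟩ := hper.exists_mem_Ico₀ (by positivity) y
    exact ⟨(s, y'), ⟨hs, Set.Ico_subset_Icc_self hy'⟩, hval.symm⟩
  have hbdd : BddAbove ((fun p : ℝ × ℝ => g p.1 p.2) '' (Set.Icc a b ×ˢ (Set.univ : Set ℝ))) :=
    BddAbove.mono himg ((isCompact_Icc.prod isCompact_Icc).image hc).bddAbove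
  exact le_csSup hbdd ⟨(t, x), ⟨ht, trivial⟩, rfl⟩

end AreaAux


open AreaAux in
/-- **First-order estimates on the area function in conformal coordinates.**
For every `r₀ > 0` and `K` there is `C > 0` such that any smooth conformal solution
with twist constant `K`, with `R ≥ r₀`, defined on an interval of length `≤ 1`,
satisfies (i) `‖R‖_{C¹} ≤ C((τ−τ₀)·sup e^{2ν} + sup_ξ(|R|+|R_τ|+|R_ξ|)(τ₀,·))` and
(ii) if `R_u(τ₀,·) > 0` and `R_v(τ₀,·) > 0` then
`R_τ² − R_ξ² ≥ (inf R_u(τ₀,·))(inf R_v(τ₀,·))`. -/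
theorem area_function_first_order_estimates (r₀ K : ℝ) (hr₀ : 0 < r₀) :
    ∃ C : ℝ, 0 < C ∧
      ∀ τ₀ τ₁ : ℝ, τ₀ < τ₁ → τ₁ - τ₀ ≤ 1 →
        ∀ S : ConfSol (Set.Ico τ₀ τ₁) K,
          (∀ τ ∈ Set.Ico τ₀ τ₁, ∀ ξ : ℝ, r₀ ≤ S.R τ ξ) →
          ∀ τ ∈ Set.Ico τ₀ τ₁,
            (C1norm S.R τ₀ τ ≤
              C * ((τ - τ₀) * supStrip (fun t x => Real.exp (2 * S.ν t x)) τ₀ τ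
                + (⨆ ξ : ℝ, (|S.R τ₀ ξ| + |pd1 S.R τ₀ ξ| + |pd2 S.R τ₀ ξ|)))) ∧
            ((∀ ξ : ℝ, 0 < pd1 S.R τ₀ ξ - pd2 S.R τ₀ ξ) →
              (∀ ξ : ℝ, 0 < pd1 S.R τ₀ ξ + pd2 S.R τ₀ ξ) →
              ∀ ξ : ℝ,
                (⨅ ξ' : ℝ, (pd1 S.R τ₀ ξ' - pd2 S.R τ₀ ξ'))
                    * (⨅ ξ' : ℝ, (pd1 S.R τ₀ ξ' + pd2 S.R τ₀ ξ'))
                  ≤ (pd1 S.R τ ξ) ^ 2 - (pd2 S.R τ ξ) ^ 2) := by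
  classical
  have hr3 : (0 : ℝ) < r₀ ^ 3 := pow_pos hr₀ 3
  have hc₁ : (0 : ℝ) ≤ K ^ 2 / (2 * r₀ ^ 3) := div_nonneg (sq_nonneg K) (by linarith)
  refine ⟨4 + 3 * (K ^ 2 / (2 * r₀ ^ 3)), by linarith, ?_⟩
  intro τ₀ τ₁ hτ01 hlen S hR τ hτmem
  have hf := S.smooth_R
  have hdf : Differentiable ℝ (Function.uncurry S.R) :=
    hf.differentiable (by simp)
  have hτ₀τ : τ₀ ≤ τ := hτmem.1
  have hτlt : τ < τ₁ := hτmem.2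
  -- the wave equation source term bounds
  set E := supStrip (fun t x => Real.exp (2 * S.ν t x)) τ₀ τ with hEdef
  have hexp_cont : Continuous fun p : ℝ × ℝ => Real.exp (2 * S.ν p.1 p.2) :=
    Real.continuous_exp.comp (continuous_const.mul S.smooth_ν.continuous)
  have hE : ∀ t ∈ Set.Icc τ₀ τ, ∀ x : ℝ, Real.exp (2 * S.ν t x) ≤ E :=
    le_supStrip hexp_cont (fun t x => by rw [S.periodic_ν]) hτ₀τ
  have hE0 : (0 : ℝ) ≤ E :=
    le_trans (Real.exp_pos _).le (hE τ₀ ⟨le_refl _, hτ₀τ⟩ 0)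
  set M := K ^ 2 / (2 * r₀ ^ 3) * E with hMdef
  have hM0 : 0 ≤ M := mul_nonneg hc₁ hE0
  have hGbound : ∀ t ∈ Set.Icc τ₀ τ, ∀ x : ℝ,
      0 ≤ pd1 (pd1 S.R) t x - pd2 (pd2 S.R) t x ∧
      pd1 (pd1 S.R) t x - pd2 (pd2 S.R) t x ≤ M := by
    intro t ht x
    have htD : t ∈ Set.Ico τ₀ τ₁ := ⟨ht.1, lt_of_le_of_lt ht.2 hτlt⟩
    have hRpos := S.Rpos t htD x
    have hRge := hR t htD x
    rw [S.evol_R t htD x]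
    constructor
    · exact div_nonneg (mul_nonneg (Real.exp_pos _).le (sq_nonneg K))
        (by positivity)
    · have h1 : Real.exp (2 * S.ν t x) * K ^ 2 ≤ E * K ^ 2 :=
        mul_le_mul_of_nonneg_right (hE t ht x) (sq_nonneg K)
      have h3 : 2 * r₀ ^ 3 ≤ 2 * (S.R t x) ^ 3 := by
        have := pow_le_pow_left₀ hr₀.le hRge 3
        linarith
      have := div_le_div₀ (mul_nonneg hE0 (sq_nonneg K)) h1 (by linarith) h3
      calc Real.exp (2 * S.ν t x) * K ^ 2 / (2 * S.R t x ^ 3)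
          ≤ E * K ^ 2 / (2 * r₀ ^ 3) := this
        _ = M := by rw [hMdef]; ring
  -- initial data sup
  set S₀ := ⨆ ξ : ℝ, (|S.R τ₀ ξ| + |pd1 S.R τ₀ ξ| + |pd2 S.R τ₀ ξ|) with hS₀def
  have hpd1per : ∀ t ξ : ℝ, pd1 S.R t (ξ + 2 * π) = pd1 S.R t ξ := by
    intro t ξ
    unfold pd1
    congr 1
    funext s
    exact S.periodic_R s ξ
  have hpd2per : ∀ t ξ : ℝ, pd2 S.R t (ξ + 2 * π) = pd2 S.R t ξ := by
    intro t ξ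
    show deriv (fun s => S.R t s) (ξ + 2 * π) = deriv (fun s => S.R t s) ξ
    rw [← deriv_comp_add_const (fun s => S.R t s) (2 * π) ξ]
    congr 1
    funext s
    exact S.periodic_R t s
  have hpd1c : Continuous fun ξ => pd1 S.R τ₀ ξ := by
    have he : (fun ξ => pd1 S.R τ₀ ξ)
        = fun ξ => fderiv ℝ (Function.uncurry S.R) (τ₀, ξ) (1, 0) :=
      funext fun ξ => pd1_eq hdf τ₀ ξ
    rw [he]
    exact Continuous.clm_apply
      ((smooth_fderiv hf).continuous.comp (continuous_const.prodMk continuous_id))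
      continuous_const
  have hpd2c : Continuous fun ξ => pd2 S.R τ₀ ξ := by
    have he : (fun ξ => pd2 S.R τ₀ ξ)
        = fun ξ => fderiv ℝ (Function.uncurry S.R) (τ₀, ξ) (0, 1) :=
      funext fun ξ => pd2_eq hdf τ₀ ξ
    rw [he]
    exact Continuous.clm_apply
      ((smooth_fderiv hf).continuous.comp (continuous_const.prodMk continuous_id))
      continuous_const
  have hRc : Continuous fun ξ => S.R τ₀ ξ :=
    hf.continuous.comp (continuous_const.prodMk continuous_id)
  have hS₀bdd : BddAbove (Set.range fun ξ : ℝ =>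
      |S.R τ₀ ξ| + |pd1 S.R τ₀ ξ| + |pd2 S.R τ₀ ξ|) := by
    apply bddAbove_range_of_periodic
    · exact (hRc.abs.add hpd1c.abs).add hpd2c.abs
    · intro ξ
      rw [S.periodic_R, hpd1per, hpd2per]
  have hS₀ : ∀ ξ : ℝ, |S.R τ₀ ξ| + |pd1 S.R τ₀ ξ| + |pd2 S.R τ₀ ξ| ≤ S₀ :=
    fun ξ => le_ciSup hS₀bdd ξ
  have hS₀0 : (0 : ℝ) ≤ S₀ := le_trans (by positivity) (hS₀ 0)
  -- bounds on the characteristic derivatives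
  have key : ∀ t ∈ Set.Icc τ₀ τ, ∀ x : ℝ,
      |pd1 S.R t x - pd2 S.R t x| ≤ S₀ + M * (τ - τ₀) ∧
      |pd1 S.R t x + pd2 S.R t x| ≤ S₀ + M * (τ - τ₀) := by
    intro t ht x
    have hMt : M * (t - τ₀) ≤ M * (τ - τ₀) :=
      mul_le_mul_of_nonneg_left (by linarith [ht.2]) hM0
    have hMt0 : 0 ≤ M * (t - τ₀) := mul_nonneg hM0 (by linarith [ht.1])
    constructor
    · -- R_u bound
      set c := x - t with hcdef
      set h : ℝ → ℝ := fun s => pd1 S.R s (c + s) - pd2 S.R s (c + s) with hhdef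
      have hd : Differentiable ℝ h := fun s => (hasDerivAt_Ru hf c s).differentiableAt
      have hderiv : ∀ s ∈ Set.Icc τ₀ t,
          0 ≤ deriv h s ∧ deriv h s ≤ M := by
        intro s hs
        rw [(hasDerivAt_Ru hf c s).deriv]
        exact hGbound s ⟨hs.1, hs.2.trans ht.2⟩ (c + s)
      have hup : h t ≤ h τ₀ + M * (t - τ₀) :=
        le_of_deriv_le hd ht.1 (fun s hs => (hderiv s hs).2)
      have hlo : h τ₀ + 0 * (t - τ₀) ≤ h t :=
        ge_of_deriv_ge hd ht.1 (fun s hs => (hderiv s hs).1)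
      have hinit : |h τ₀| ≤ S₀ := by
        have := hS₀ (c + τ₀)
        have habs := abs_sub (pd1 S.R τ₀ (c + τ₀)) (pd2 S.R τ₀ (c + τ₀))
        have := abs_nonneg (S.R τ₀ (c + τ₀))
        simp only [hhdef]
        linarith [abs_sub_abs_le_abs_sub (pd1 S.R τ₀ (c + τ₀)) (pd2 S.R τ₀ (c + τ₀)),
          abs_sub (pd1 S.R τ₀ (c + τ₀)) (pd2 S.R τ₀ (c + τ₀)), hS₀ (c + τ₀),
          abs_nonneg (S.R τ₀ (c + τ₀))]
      have hct : c + t = x := by ring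
      have hht : h t = pd1 S.R t x - pd2 S.R t x := by rw [hhdef]; simp [hct]
      rw [← hht, abs_le]
      constructor
      · linarith [neg_abs_le (h τ₀)]
      · linarith [le_abs_self (h τ₀)]
    · -- R_v bound
      set c := x + t with hcdef
      set h : ℝ → ℝ := fun s => pd1 S.R s (c - s) + pd2 S.R s (c - s) with hhdef
      have hd : Differentiable ℝ h := fun s => (hasDerivAt_Rv hf c s).differentiableAt
      have hderiv : ∀ s ∈ Set.Icc τ₀ t,
          0 ≤ deriv h s ∧ deriv h s ≤ M := by
        intro s hs
        rw [(hasDerivAt_Rv hf c s).deriv]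
        exact hGbound s ⟨hs.1, hs.2.trans ht.2⟩ (c - s)
      have hup : h t ≤ h τ₀ + M * (t - τ₀) :=
        le_of_deriv_le hd ht.1 (fun s hs => (hderiv s hs).2)
      have hlo : h τ₀ + 0 * (t - τ₀) ≤ h t :=
        ge_of_deriv_ge hd ht.1 (fun s hs => (hderiv s hs).1)
      have hinit : |h τ₀| ≤ S₀ := by
        simp only [hhdef]
        linarith [abs_add_le (pd1 S.R τ₀ (c - τ₀)) (pd2 S.R τ₀ (c - τ₀)), hS₀ (c - τ₀),
          abs_nonneg (S.R τ₀ (c - τ₀))]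
      have hct : c - t = x := by ring
      have hht : h t = pd1 S.R t x + pd2 S.R t x := by rw [hhdef]; simp [hct]
      rw [← hht, abs_le]
      constructor
      · linarith [neg_abs_le (h τ₀)]
      · linarith [le_abs_self (h τ₀)]
  -- bounds on first derivatives
  set B := S₀ + M * (τ - τ₀) with hBdef
  have hB0 : 0 ≤ B := by
    have : 0 ≤ M * (τ - τ₀) := mul_nonneg hM0 (by linarith)
    linarith
  have hpd : ∀ t ∈ Set.Icc τ₀ τ, ∀ x : ℝ, |pd1 S.R t x| ≤ B ∧ |pd2 S.R t x| ≤ B := by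
    intro t ht x
    obtain ⟨k1, k2⟩ := key t ht x
    rw [abs_le] at k1 k2 ⊢
    rw [abs_le]
    constructor <;> constructor <;> [skip; skip; skip; skip] <;> linarith [k1.1, k1.2, k2.1, k2.2]
  -- bound on R itself
  have hRbnd : ∀ t ∈ Set.Icc τ₀ τ, ∀ x : ℝ, |S.R t x| ≤ S₀ + B := by
    intro t ht x
    have hle1 : t - τ₀ ≤ 1 := by linarith [ht.2, hτlt, hlen]
    set h : ℝ → ℝ := fun s => S.R s x with hhdef
    have hd : Differentiable ℝ h := fun s => (hasDerivAt_pd1 hdf s x).differentiableAt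
    have hderiv : ∀ s ∈ Set.Icc τ₀ t, |deriv h s| ≤ B := by
      intro s hs
      have : deriv h s = pd1 S.R s x := ((hasDerivAt_pd1 hdf s x).congr_deriv
        (pd1_eq hdf s x).symm).deriv
      rw [this]
      exact (hpd s ⟨hs.1, hs.2.trans ht.2⟩ x).1
    have hup : h t ≤ h τ₀ + B * (t - τ₀) :=
      le_of_deriv_le hd ht.1 (fun s hs => le_trans (le_abs_self _) (hderiv s hs))
    have hlo : h τ₀ + (-B) * (t - τ₀) ≤ h t :=
      ge_of_deriv_ge hd ht.1 (fun s hs => by linarith [neg_abs_le (deriv h s), hderiv s hs])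
    have hBt : B * (t - τ₀) ≤ B := by nlinarith [ht.1]
    have h0 : |h τ₀| ≤ S₀ := by
      simp only [hhdef]
      linarith [hS₀ x, abs_nonneg (pd1 S.R τ₀ x), abs_nonneg (pd2 S.R τ₀ x)]
    rw [abs_le]
    constructor
    · have := neg_abs_le (h τ₀)
      simp only [hhdef] at hup hlo ⊢
      nlinarith [ht.1]
    · have := le_abs_self (h τ₀)
      simp only [hhdef] at hup hlo ⊢
      nlinarith [ht.1]
  refine ⟨?_, ?_⟩
  · -- (i)
    have hpoint : ∀ t ∈ Set.Icc τ₀ τ, ∀ x : ℝ,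
        |S.R t x| + |pd1 S.R t x| + |pd2 S.R t x|
          ≤ (4 + 3 * (K ^ 2 / (2 * r₀ ^ 3))) * ((τ - τ₀) * E + S₀) := by
      intro t ht x
      obtain ⟨k1, k2⟩ := hpd t ht x
      have k3 := hRbnd t ht x
      have hΔE : 0 ≤ (τ - τ₀) * E := mul_nonneg (by linarith) hE0
      have hMΔ : M * (τ - τ₀) = K ^ 2 / (2 * r₀ ^ 3) * ((τ - τ₀) * E) := by
        rw [hMdef]; ring
      nlinarith [mul_nonneg hc₁ hS₀0, mul_nonneg hc₁ hΔE]
    show C1norm S.R τ₀ τ ≤ _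
    unfold C1norm supStrip
    apply csSup_le
    · exact ⟨_, ⟨(τ₀, 0), ⟨⟨le_refl _, hτ₀τ⟩, trivial⟩, rfl⟩⟩
    · rintro b ⟨⟨t, x⟩, ⟨ht, -⟩, rfl⟩
      exact hpoint t ht x
  · -- (ii)
    intro hu hv ξ
    have hbdd₁ : BddBelow (Set.range fun ξ' => pd1 S.R τ₀ ξ' - pd2 S.R τ₀ ξ') :=
      ⟨0, by rintro _ ⟨ξ', rfl⟩; exact (hu ξ').le⟩
    have hbdd₂ : BddBelow (Set.range fun ξ' => pd1 S.R τ₀ ξ' + pd2 S.R τ₀ ξ') :=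
      ⟨0, by rintro _ ⟨ξ', rfl⟩; exact (hv ξ').le⟩
    have hm₁0 : 0 ≤ ⨅ ξ' : ℝ, (pd1 S.R τ₀ ξ' - pd2 S.R τ₀ ξ') :=
      le_ciInf fun ξ' => (hu ξ').le
    have hm₂0 : 0 ≤ ⨅ ξ' : ℝ, (pd1 S.R τ₀ ξ' + pd2 S.R τ₀ ξ') :=
      le_ciInf fun ξ' => (hv ξ').le
    -- monotonicity along characteristics
    have hmono₁ : (⨅ ξ' : ℝ, (pd1 S.R τ₀ ξ' - pd2 S.R τ₀ ξ'))
        ≤ pd1 S.R τ ξ - pd2 S.R τ ξ := by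
      set c := ξ - τ with hcdef
      set h : ℝ → ℝ := fun s => pd1 S.R s (c + s) - pd2 S.R s (c + s) with hhdef
      have hd : Differentiable ℝ h := fun s => (hasDerivAt_Ru hf c s).differentiableAt
      have hlo : h τ₀ + 0 * (τ - τ₀) ≤ h τ := by
        apply ge_of_deriv_ge hd hτ₀τ
        intro s hs
        rw [(hasDerivAt_Ru hf c s).deriv]
        exact (hGbound s ⟨hs.1, hs.2⟩ (c + s)).1
      have h1 : (⨅ ξ' : ℝ, (pd1 S.R τ₀ ξ' - pd2 S.R τ₀ ξ')) ≤ h τ₀ :=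
        ciInf_le hbdd₁ (c + τ₀)
      have hct : c + τ = ξ := by ring
      have hht : h τ = pd1 S.R τ ξ - pd2 S.R τ ξ := by rw [hhdef]; simp [hct]
      linarith [hht ▸ (by linarith : h τ₀ ≤ h τ)]
    have hmono₂ : (⨅ ξ' : ℝ, (pd1 S.R τ₀ ξ' + pd2 S.R τ₀ ξ'))
        ≤ pd1 S.R τ ξ + pd2 S.R τ ξ := by
      set c := ξ + τ with hcdef
      set h : ℝ → ℝ := fun s => pd1 S.R s (c - s) + pd2 S.R s (c - s) with hhdef
      have hd : Differentiable ℝ h := fun s => (hasDerivAt_Rv hf c s).differentiableAt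
      have hlo : h τ₀ + 0 * (τ - τ₀) ≤ h τ := by
        apply ge_of_deriv_ge hd hτ₀τ
        intro s hs
        rw [(hasDerivAt_Rv hf c s).deriv]
        exact (hGbound s ⟨hs.1, hs.2⟩ (c - s)).1
      have h1 : (⨅ ξ' : ℝ, (pd1 S.R τ₀ ξ' + pd2 S.R τ₀ ξ')) ≤ h τ₀ :=
        ciInf_le hbdd₂ (c - τ₀)
      have hct : c - τ = ξ := by ring
      have hht : h τ = pd1 S.R τ ξ + pd2 S.R τ ξ := by rw [hhdef]; simp [hct]
      linarith [hht ▸ (by linarith : h τ₀ ≤ h τ)]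
    have hfac : (pd1 S.R τ ξ) ^ 2 - (pd2 S.R τ ξ) ^ 2
        = (pd1 S.R τ ξ - pd2 S.R τ ξ) * (pd1 S.R τ ξ + pd2 S.R τ ξ) := by ring
    rw [hfac]
    exact mul_le_mul hmono₁ hmono₂ hm₂0 (le_trans hm₁0 hmono₁)
end

section
/- For every r₀ > 0 and m₀ > 0 there exists a constant C > 0 with the following property. Let (U, A, ν, R) with twist constant K be a smooth conformal solution on [τ₀,τ₁) with R ≥ r₀ and R_τ² − R_ξ² ≥ m₀ everywhere. Then for every τ ∈ [τ₀,τ₁), ∫₀^{2π} |ν_ξ(τ,ξ)| dξ + ∫₀^{2π} |ν_τ(τ,ξ)| dξ ≤ C ‖R‖_{C¹([τ₀,τ]×ℝ)} ( 𝓔_conf(τ) + ∫₀^{2π} |R_ξξ(τ,ξ)| dξ + ∫₀^{2π} |R_ξτ(τ,ξ)| dξ ), where ‖R‖_{C¹([τ₀,τ]×ℝ)} := sup over [τ₀,τ]×ℝ of (|R| + |R_τ| + |R_ξ|). -/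
open Real

section Helpers

open Function

lemma pd1_eq_fderiv' (f : ℝ → ℝ → ℝ) (h : ContDiff ℝ (⊤ : ℕ∞) (Function.uncurry f)) (x y : ℝ) :
    pd1 f x y = fderiv ℝ (Function.uncurry f) (x, y) (1, 0) := by
  have hd : HasFDerivAt (Function.uncurry f) (fderiv ℝ (Function.uncurry f) (x, y)) (x, y) :=
    (h.differentiable (by simp) (x, y)).hasFDerivAt
  have hc : HasDerivAt (fun s : ℝ => (s, y)) ((1 : ℝ), (0 : ℝ)) x := by
    simpa using HasDerivAt.prodMk (hasDerivAt_id x) (hasDerivAt_const x y)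
  exact (hd.comp_hasDerivAt x hc).deriv

lemma pd2_eq_fderiv' (f : ℝ → ℝ → ℝ) (h : ContDiff ℝ (⊤ : ℕ∞) (Function.uncurry f)) (x y : ℝ) :
    pd2 f x y = fderiv ℝ (Function.uncurry f) (x, y) (0, 1) := by
  have hd : HasFDerivAt (Function.uncurry f) (fderiv ℝ (Function.uncurry f) (x, y)) (x, y) :=
    (h.differentiable (by simp) (x, y)).hasFDerivAt
  have hc : HasDerivAt (fun s : ℝ => (x, s)) ((0 : ℝ), (1 : ℝ)) y := by
    simpa using HasDerivAt.prodMk (hasDerivAt_const y x) (hasDerivAt_id y)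
  exact (hd.comp_hasDerivAt y hc).deriv

lemma contDiff_pd1 (f : ℝ → ℝ → ℝ) (h : ContDiff ℝ (⊤ : ℕ∞) (Function.uncurry f)) :
    ContDiff ℝ (⊤ : ℕ∞) (Function.uncurry (pd1 f)) := by
  have he : Function.uncurry (pd1 f) = fun p : ℝ × ℝ => fderiv ℝ (Function.uncurry f) p (1, 0) := by
    funext p
    exact pd1_eq_fderiv' f h p.1 p.2
  rw [he]
  exact (ContinuousLinearMap.apply ℝ ℝ ((1:ℝ), (0:ℝ))).contDiff.comp
    (h.fderiv_right (mod_cast le_top))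

lemma contDiff_pd2 (f : ℝ → ℝ → ℝ) (h : ContDiff ℝ (⊤ : ℕ∞) (Function.uncurry f)) :
    ContDiff ℝ (⊤ : ℕ∞) (Function.uncurry (pd2 f)) := by
  have he : Function.uncurry (pd2 f) = fun p : ℝ × ℝ => fderiv ℝ (Function.uncurry f) p (0, 1) := by
    funext p
    exact pd2_eq_fderiv' f h p.1 p.2
  rw [he]
  exact (ContinuousLinearMap.apply ℝ ℝ ((0:ℝ), (1:ℝ))).contDiff.comp
    (h.fderiv_right (mod_cast le_top))

lemma cont_slice {f : ℝ → ℝ → ℝ} (h : ContDiff ℝ (⊤ : ℕ∞) (Function.uncurry f)) (τ : ℝ) :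
    Continuous (fun ξ => f τ ξ) :=
  h.continuous.comp (continuous_const.prodMk continuous_id)

lemma pd1_periodic (f : ℝ → ℝ → ℝ) (hp : ∀ τ ξ : ℝ, f τ (ξ + 2 * π) = f τ ξ) (t x : ℝ) :
    pd1 f t (x + 2 * π) = pd1 f t x := by
  unfold pd1
  congr 1
  funext s
  exact hp s x

lemma pd2_periodic (f : ℝ → ℝ → ℝ) (hp : ∀ τ ξ : ℝ, f τ (ξ + 2 * π) = f τ ξ) (t x : ℝ) :
    pd2 f t (x + 2 * π) = pd2 f t x := by
  have h : (fun y => f t (y + 2 * π)) = fun y => f t y := funext fun y => hp t y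
  unfold pd2
  rw [← deriv_comp_add_const, h]

lemma key_alg (a b p q e1 e2 e3 g w z M m₀ : ℝ) (hm : 0 < m₀) (hd : m₀ ≤ a^2 - b^2)
    (ha : |a| ≤ M) (hb : |b| ≤ M)
    (hF : p*a + q*b = e1 + e2 + e3 + w) (hG : q*a + p*b = g + z)
    (hg : |g| ≤ e1 + e2) (h1 : 0 ≤ e1) (h2 : 0 ≤ e2) (h3 : 0 ≤ e3) :
    |q| + |p| ≤ 4 / m₀ * M * ((e1 + e2 + e3) + |w| + |z|) := by
  have hM0 : 0 ≤ M := le_trans (abs_nonneg a) ha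
  set d := a^2 - b^2 with hdd
  have hd0 : 0 < d := lt_of_lt_of_le hm hd
  have hFb : |e1 + e2 + e3 + w| ≤ (e1 + e2 + e3) + |w| := by
    calc |e1 + e2 + e3 + w| ≤ |e1 + e2 + e3| + |w| := abs_add_le _ _
    _ ≤ (e1 + e2 + e3) + |w| := by rw [abs_of_nonneg (by linarith)]
  have hGb : |g + z| ≤ (e1 + e2 + e3) + |z| := by
    calc |g + z| ≤ |g| + |z| := abs_add_le _ _
    _ ≤ (e1 + e2 + e3) + |z| := by linarith
  have key : ∀ u v : ℝ, d * u = v → |v| ≤ M * ((e1+e2+e3) + |w|) + M * ((e1+e2+e3) + |z|) →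
      m₀ * |u| ≤ M * ((e1+e2+e3) + |w|) + M * ((e1+e2+e3) + |z|) := by
    intro u v hv hvb
    have h1' : m₀ * |u| ≤ d * |u| := mul_le_mul_of_nonneg_right hd (abs_nonneg u)
    have h2' : d * |u| = |v| := by rw [← hv, abs_mul, abs_of_pos hd0]
    linarith
  have hp : m₀ * |p| ≤ M * ((e1+e2+e3) + |w|) + M * ((e1+e2+e3) + |z|) := by
    refine key p (a * (e1+e2+e3+w) - b * (g+z)) (by rw [← hF, ← hG]; ring) ?_
    calc |a * (e1+e2+e3+w) - b * (g+z)| ≤ |a * (e1+e2+e3+w)| + |b * (g+z)| := abs_sub _ _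
    _ = |a| * |e1+e2+e3+w| + |b| * |g+z| := by rw [abs_mul, abs_mul]
    _ ≤ M * ((e1+e2+e3) + |w|) + M * ((e1+e2+e3) + |z|) :=
        add_le_add (mul_le_mul ha hFb (abs_nonneg _) hM0) (mul_le_mul hb hGb (abs_nonneg _) hM0)
  have hq : m₀ * |q| ≤ M * ((e1+e2+e3) + |w|) + M * ((e1+e2+e3) + |z|) := by
    have h' : |a * (g+z) - b * (e1+e2+e3+w)| ≤ M * ((e1+e2+e3) + |w|) + M * ((e1+e2+e3) + |z|) := by
      calc |a * (g+z) - b * (e1+e2+e3+w)| ≤ |a * (g+z)| + |b * (e1+e2+e3+w)| := abs_sub _ _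
      _ = |a| * |g+z| + |b| * |e1+e2+e3+w| := by rw [abs_mul, abs_mul]
      _ ≤ M * ((e1+e2+e3) + |z|) + M * ((e1+e2+e3) + |w|) :=
          add_le_add (mul_le_mul ha hGb (abs_nonneg _) hM0) (mul_le_mul hb hFb (abs_nonneg _) hM0)
      _ = _ := by ring
    exact key q (a * (g+z) - b * (e1+e2+e3+w)) (by rw [← hF, ← hG]; ring) h'
  have hMw : 0 ≤ M * |z| := mul_nonneg hM0 (abs_nonneg z)
  have hMz : 0 ≤ M * |w| := mul_nonneg hM0 (abs_nonneg w)
  have hsum : m₀ * (|q| + |p|) ≤ 4 * (M * ((e1+e2+e3) + |w| + |z|)) := by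
    have e1' : M * ((e1+e2+e3) + |w|) ≤ M * ((e1+e2+e3) + |w| + |z|) := by nlinarith
    have e2' : M * ((e1+e2+e3) + |z|) ≤ M * ((e1+e2+e3) + |w| + |z|) := by nlinarith
    linarith [hp, hq]
  rw [div_mul_eq_mul_div, div_mul_eq_mul_div, le_div_iff₀ hm]
  linarith [hsum]

lemma solveC1 {R u v w p q a b E4 E2 : ℝ}
    (h : u + E4 / (4 * R ^ 2) * v + w / R - p * a / R - q * b / R + E2 / (4 * R ^ 4) = 0)
    (hR : R ≠ 0) :
    p * a + q * b = R * u + E4 / (4 * R) * v + E2 / (4 * R ^ 3) + w := by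
  have e : p * a / R + q * b / R = u + E4 / (4 * R ^ 2) * v + w / R + E2 / (4 * R ^ 4) := by
    linarith
  calc p * a + q * b = R * (p * a / R + q * b / R) := by
        field_simp
  _ = R * (u + E4 / (4 * R ^ 2) * v + w / R + E2 / (4 * R ^ 4)) := by rw [e]
  _ = R * u + E4 / (4 * R) * v + E2 / (4 * R ^ 3) + w := by
        field_simp
        ring

lemma solveC2 {R c d z p q a b E4 : ℝ}
    (h : c + E4 / (2 * R ^ 2) * d + z / R - q * a / R - p * b / R = 0)
    (hR : R ≠ 0) :
    q * a + p * b = (R * c + E4 / (2 * R) * d) + z := by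
  have e : q * a / R + p * b / R = c + E4 / (2 * R ^ 2) * d + z / R := by
    linarith
  calc q * a + p * b = R * (q * a / R + p * b / R) := by
        field_simp
  _ = R * (c + E4 / (2 * R ^ 2) * d + z / R) := by rw [e]
  _ = (R * c + E4 / (2 * R) * d) + z := by
        field_simp

lemma g_bound (R x y s t E4 : ℝ) (hR : 0 < R) (hE : 0 < E4) :
    |R * (2 * x * y) + E4 / (2 * R) * (s * t)|
      ≤ R * (x ^ 2 + y ^ 2) + E4 / (4 * R) * (s ^ 2 + t ^ 2) := by
  have h1 : |R * (2 * x * y)| ≤ R * (x ^ 2 + y ^ 2) := by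
    rw [abs_mul, abs_of_pos hR]
    refine mul_le_mul_of_nonneg_left ?_ hR.le
    exact abs_le.mpr ⟨by nlinarith [sq_nonneg (x + y)], by nlinarith [sq_nonneg (x - y)]⟩
  have hc : 0 < E4 / (4 * R) := by positivity
  have h2 : |E4 / (2 * R) * (s * t)| ≤ E4 / (4 * R) * (s ^ 2 + t ^ 2) := by
    have he : E4 / (2 * R) * (s * t) = (E4 / (4 * R)) * (2 * s * t) := by
      field_simp
      ring
    rw [he, abs_mul, abs_of_pos hc]
    refine mul_le_mul_of_nonneg_left ?_ hc.le
    exact abs_le.mpr ⟨by nlinarith [sq_nonneg (s + t)], by nlinarith [sq_nonneg (s - t)]⟩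
  calc |R * (2 * x * y) + E4 / (2 * R) * (s * t)|
      ≤ |R * (2 * x * y)| + |E4 / (2 * R) * (s * t)| := abs_add_le _ _
  _ ≤ _ := add_le_add h1 h2

end Helpers

/-- **First-order `L¹` estimate on `ν` in conformal coordinates.**
For every `r₀ > 0` and `m₀ > 0` there is `C > 0` such that any smooth conformal
solution with `R ≥ r₀` and `R_τ² − R_ξ² ≥ m₀` satisfies
`∫|ν_ξ| + ∫|ν_τ| ≤ C ‖R‖_{C¹} (𝓔_conf(τ) + ∫|R_ξξ| + ∫|R_ξτ|)`. -/
theorem nu_first_order_estimate (r₀ m₀ : ℝ) (hr₀ : 0 < r₀) (hm₀ : 0 < m₀) :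
    ∃ C : ℝ, 0 < C ∧
      ∀ (τ₀ τ₁ K : ℝ), τ₀ < τ₁ →
        ∀ S : ConfSol (Set.Ico τ₀ τ₁) K,
          (∀ τ ∈ Set.Ico τ₀ τ₁, ∀ ξ : ℝ, r₀ ≤ S.R τ ξ) →
          (∀ τ ∈ Set.Ico τ₀ τ₁, ∀ ξ : ℝ,
            m₀ ≤ (pd1 S.R τ ξ) ^ 2 - (pd2 S.R τ ξ) ^ 2) →
          ∀ τ ∈ Set.Ico τ₀ τ₁,
            (∫ ξ in (0:ℝ)..(2 * Real.pi), |pd2 S.ν τ ξ|)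
              + (∫ ξ in (0:ℝ)..(2 * Real.pi), |pd1 S.ν τ ξ|)
            ≤ C * C1norm S.R τ₀ τ *
                (Econf K S.U S.A S.ν S.R τ
                  + (∫ ξ in (0:ℝ)..(2 * Real.pi), |pd2 (pd2 S.R) τ ξ|)
                  + (∫ ξ in (0:ℝ)..(2 * Real.pi), |pd1 (pd2 S.R) τ ξ|)) := by
  refine ⟨4 / m₀, by positivity, ?_⟩
  intro τ₀ τ₁ K hττ S hRlow hRm τ hτ
  -- continuity of the various slices at time τ
  have hcR : Continuous (fun ξ => S.R τ ξ) := cont_slice S.smooth_R τ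
  have hcU : Continuous (fun ξ => S.U τ ξ) := cont_slice S.smooth_U τ
  have hcν : Continuous (fun ξ => S.ν τ ξ) := cont_slice S.smooth_ν τ
  have hcU1 : Continuous (fun ξ => pd1 S.U τ ξ) := cont_slice (contDiff_pd1 _ S.smooth_U) τ
  have hcU2 : Continuous (fun ξ => pd2 S.U τ ξ) := cont_slice (contDiff_pd2 _ S.smooth_U) τ
  have hcA1 : Continuous (fun ξ => pd1 S.A τ ξ) := cont_slice (contDiff_pd1 _ S.smooth_A) τ
  have hcA2 : Continuous (fun ξ => pd2 S.A τ ξ) := cont_slice (contDiff_pd2 _ S.smooth_A) τ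
  have hcν1 : Continuous (fun ξ => pd1 S.ν τ ξ) := cont_slice (contDiff_pd1 _ S.smooth_ν) τ
  have hcν2 : Continuous (fun ξ => pd2 S.ν τ ξ) := cont_slice (contDiff_pd2 _ S.smooth_ν) τ
  have hcW : Continuous (fun ξ => pd2 (pd2 S.R) τ ξ) :=
    cont_slice (contDiff_pd2 _ (contDiff_pd2 _ S.smooth_R)) τ
  have hcZ : Continuous (fun ξ => pd1 (pd2 S.R) τ ξ) :=
    cont_slice (contDiff_pd1 _ (contDiff_pd2 _ S.smooth_R)) τ
  have hRpos : ∀ ξ : ℝ, 0 < S.R τ ξ := fun ξ => lt_of_lt_of_le hr₀ (hRlow τ hτ ξ)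
  -- the C¹ norm bounds the first derivatives at time τ
  set M := C1norm S.R τ₀ τ with hMdef
  have hper : ∀ t y : ℝ,
      |S.R t (y + 2 * π)| + |pd1 S.R t (y + 2 * π)| + |pd2 S.R t (y + 2 * π)|
        = |S.R t y| + |pd1 S.R t y| + |pd2 S.R t y| := by
    intro t y
    rw [S.periodic_R, pd1_periodic _ S.periodic_R, pd2_periodic _ S.periodic_R]
  have hgc : Continuous (fun p : ℝ × ℝ => |S.R p.1 p.2| + |pd1 S.R p.1 p.2| + |pd2 S.R p.1 p.2|) := by
    exact (S.smooth_R.continuous.abs.add (contDiff_pd1 _ S.smooth_R).continuous.abs).add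
      (contDiff_pd2 _ S.smooth_R).continuous.abs
  have hsub : (fun p : ℝ × ℝ => |S.R p.1 p.2| + |pd1 S.R p.1 p.2| + |pd2 S.R p.1 p.2|) ''
        (Set.Icc τ₀ τ ×ˢ (Set.univ : Set ℝ))
      ⊆ (fun p : ℝ × ℝ => |S.R p.1 p.2| + |pd1 S.R p.1 p.2| + |pd2 S.R p.1 p.2|) ''
        (Set.Icc τ₀ τ ×ˢ Set.Icc 0 (2 * π)) := by
    rintro v ⟨⟨t, x⟩, ⟨ht, -⟩, rfl⟩
    have hperiodic : Function.Periodic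
        (fun y => |S.R t y| + |pd1 S.R t y| + |pd2 S.R t y|) (2 * π) := fun y => hper t y
    obtain ⟨y, hy, hxy⟩ := hperiodic.exists_mem_Ico₀ (by positivity) x
    exact ⟨(t, y), ⟨ht, ⟨hy.1, hy.2.le⟩⟩, hxy.symm⟩
  have hbdd : BddAbove ((fun p : ℝ × ℝ => |S.R p.1 p.2| + |pd1 S.R p.1 p.2| + |pd2 S.R p.1 p.2|) ''
      (Set.Icc τ₀ τ ×ˢ (Set.univ : Set ℝ))) :=
    BddAbove.mono hsub ((isCompact_Icc.prod isCompact_Icc).image hgc).bddAbove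
  have hgle : ∀ ξ : ℝ, |S.R τ ξ| + |pd1 S.R τ ξ| + |pd2 S.R τ ξ| ≤ M := by
    intro ξ
    refine le_csSup hbdd ⟨(τ, ξ), ⟨⟨hτ.1, le_rfl⟩, trivial⟩, rfl⟩
  have ha : ∀ ξ : ℝ, |pd1 S.R τ ξ| ≤ M := fun ξ => by
    have := hgle ξ
    have h1 := abs_nonneg (S.R τ ξ)
    have h2 := abs_nonneg (pd2 S.R τ ξ)
    linarith
  have hb : ∀ ξ : ℝ, |pd2 S.R τ ξ| ≤ M := fun ξ => by
    have := hgle ξ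
    have h1 := abs_nonneg (S.R τ ξ)
    have h2 := abs_nonneg (pd1 S.R τ ξ)
    linarith
  -- pointwise estimate
  have hpt : ∀ ξ : ℝ, |pd2 S.ν τ ξ| + |pd1 S.ν τ ξ|
      ≤ 4 / m₀ * M *
        ((S.R τ ξ * ((pd1 S.U τ ξ) ^ 2 + (pd2 S.U τ ξ) ^ 2)
            + exp (4 * S.U τ ξ) / (4 * S.R τ ξ) * ((pd1 S.A τ ξ) ^ 2 + (pd2 S.A τ ξ) ^ 2)
            + exp (2 * S.ν τ ξ) * K ^ 2 / (4 * (S.R τ ξ) ^ 3))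
          + |pd2 (pd2 S.R) τ ξ| + |pd1 (pd2 S.R) τ ξ|) := by
    intro ξ
    have hRne : S.R τ ξ ≠ 0 := (hRpos ξ).ne'
    have hF := solveC1 (S.constraint1 τ hτ ξ) hRne
    have hG := solveC2 (S.constraint2 τ hτ ξ) hRne
    have hg := g_bound (S.R τ ξ) (pd1 S.U τ ξ) (pd2 S.U τ ξ) (pd1 S.A τ ξ) (pd2 S.A τ ξ)
      (exp (4 * S.U τ ξ)) (hRpos ξ) (exp_pos _)
    refine key_alg (pd1 S.R τ ξ) (pd2 S.R τ ξ) (pd1 S.ν τ ξ) (pd2 S.ν τ ξ)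
      _ _ _ _ _ _ M m₀ hm₀ (hRm τ hτ ξ) (ha ξ) (hb ξ) hF hG hg ?_ ?_ ?_
    · have := hRpos ξ
      positivity
    · have := hRpos ξ
      positivity
    · have := hRpos ξ
      positivity
  -- integrate
  have h2π : (0 : ℝ) ≤ 2 * π := by positivity
  have hRne' : ∀ ξ : ℝ, (4 : ℝ) * S.R τ ξ ≠ 0 := fun ξ => by
    have := hRpos ξ
    positivity
  have hR3ne : ∀ ξ : ℝ, (4 : ℝ) * (S.R τ ξ) ^ 3 ≠ 0 := fun ξ => by
    have := hRpos ξ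
    positivity
  have hcE : Continuous (fun ξ =>
      S.R τ ξ * ((pd1 S.U τ ξ) ^ 2 + (pd2 S.U τ ξ) ^ 2)
        + exp (4 * S.U τ ξ) / (4 * S.R τ ξ) * ((pd1 S.A τ ξ) ^ 2 + (pd2 S.A τ ξ) ^ 2)
        + exp (2 * S.ν τ ξ) * K ^ 2 / (4 * (S.R τ ξ) ^ 3)) := by
    refine Continuous.add (Continuous.add ?_ ?_) ?_
    · exact hcR.mul ((hcU1.pow 2).add (hcU2.pow 2))
    · exact ((Real.continuous_exp.comp (continuous_const.mul hcU)).div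
        (continuous_const.mul hcR) hRne').mul ((hcA1.pow 2).add (hcA2.pow 2))
    · exact ((Real.continuous_exp.comp (continuous_const.mul hcν)).mul continuous_const).div
        (continuous_const.mul (hcR.pow 3)) hR3ne
  have iν2 : IntervalIntegrable (fun ξ => |pd2 S.ν τ ξ|) MeasureTheory.volume 0 (2 * π) :=
    hcν2.abs.intervalIntegrable _ _
  have iν1 : IntervalIntegrable (fun ξ => |pd1 S.ν τ ξ|) MeasureTheory.volume 0 (2 * π) :=
    hcν1.abs.intervalIntegrable _ _
  have iE : IntervalIntegrable (fun ξ =>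
      S.R τ ξ * ((pd1 S.U τ ξ) ^ 2 + (pd2 S.U τ ξ) ^ 2)
        + exp (4 * S.U τ ξ) / (4 * S.R τ ξ) * ((pd1 S.A τ ξ) ^ 2 + (pd2 S.A τ ξ) ^ 2)
        + exp (2 * S.ν τ ξ) * K ^ 2 / (4 * (S.R τ ξ) ^ 3)) MeasureTheory.volume 0 (2 * π) :=
    hcE.intervalIntegrable _ _
  have iW : IntervalIntegrable (fun ξ => |pd2 (pd2 S.R) τ ξ|) MeasureTheory.volume 0 (2 * π) :=
    hcW.abs.intervalIntegrable _ _
  have iZ : IntervalIntegrable (fun ξ => |pd1 (pd2 S.R) τ ξ|) MeasureTheory.volume 0 (2 * π) :=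
    hcZ.abs.intervalIntegrable _ _
  have iRHS : IntervalIntegrable (fun ξ =>
      (S.R τ ξ * ((pd1 S.U τ ξ) ^ 2 + (pd2 S.U τ ξ) ^ 2)
          + exp (4 * S.U τ ξ) / (4 * S.R τ ξ) * ((pd1 S.A τ ξ) ^ 2 + (pd2 S.A τ ξ) ^ 2)
          + exp (2 * S.ν τ ξ) * K ^ 2 / (4 * (S.R τ ξ) ^ 3))
        + |pd2 (pd2 S.R) τ ξ| + |pd1 (pd2 S.R) τ ξ|) MeasureTheory.volume 0 (2 * π) :=
    (iE.add iW).add iZ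
  calc (∫ ξ in (0:ℝ)..(2 * π), |pd2 S.ν τ ξ|) + (∫ ξ in (0:ℝ)..(2 * π), |pd1 S.ν τ ξ|)
      = ∫ ξ in (0:ℝ)..(2 * π), (|pd2 S.ν τ ξ| + |pd1 S.ν τ ξ|) :=
        (intervalIntegral.integral_add iν2 iν1).symm
  _ ≤ ∫ ξ in (0:ℝ)..(2 * π), 4 / m₀ * M *
        ((S.R τ ξ * ((pd1 S.U τ ξ) ^ 2 + (pd2 S.U τ ξ) ^ 2)
            + exp (4 * S.U τ ξ) / (4 * S.R τ ξ) * ((pd1 S.A τ ξ) ^ 2 + (pd2 S.A τ ξ) ^ 2)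
            + exp (2 * S.ν τ ξ) * K ^ 2 / (4 * (S.R τ ξ) ^ 3))
          + |pd2 (pd2 S.R) τ ξ| + |pd1 (pd2 S.R) τ ξ|) := by
      refine intervalIntegral.integral_mono_on h2π (iν2.add iν1) (iRHS.const_mul _) ?_
      intro ξ _
      exact hpt ξ
  _ = 4 / m₀ * M * ∫ ξ in (0:ℝ)..(2 * π),
        ((S.R τ ξ * ((pd1 S.U τ ξ) ^ 2 + (pd2 S.U τ ξ) ^ 2)
            + exp (4 * S.U τ ξ) / (4 * S.R τ ξ) * ((pd1 S.A τ ξ) ^ 2 + (pd2 S.A τ ξ) ^ 2)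
            + exp (2 * S.ν τ ξ) * K ^ 2 / (4 * (S.R τ ξ) ^ 3))
          + |pd2 (pd2 S.R) τ ξ| + |pd1 (pd2 S.R) τ ξ|) :=
      intervalIntegral.integral_const_mul _ _
  _ = 4 / m₀ * M * (Econf K S.U S.A S.ν S.R τ
        + (∫ ξ in (0:ℝ)..(2 * π), |pd2 (pd2 S.R) τ ξ|)
        + (∫ ξ in (0:ℝ)..(2 * π), |pd1 (pd2 S.R) τ ξ|)) := by
      rw [intervalIntegral.integral_add (iE.add iW) iZ, intervalIntegral.integral_add iE iW]
      rfl
  _ = 4 / m₀ * C1norm S.R τ₀ τ * (Econf K S.U S.A S.ν S.R τ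
        + (∫ ξ in (0:ℝ)..(2 * π), |pd2 (pd2 S.R) τ ξ|)
        + (∫ ξ in (0:ℝ)..(2 * π), |pd1 (pd2 S.R) τ ξ|)) := by rw [hMdef]
end
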